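/- Let α, β > −1 and 0 < s < 1, let J = [−1,−s] ∪ [s,1], and define E₂(s) = (∫_{J×J} (1−λ₁)^α(1+λ₁)^β (1−λ₂)^α(1+λ₂)^β (λ₂−λ₁)² dλ₁dλ₂) / (∫_{[−1,1]²} (1−λ₁)^α(1+λ₁)^β (1−λ₂)^α(1+λ₂)^β (λ₂−λ₁)² dλ₁dλ₂). Then E₂(s) = (α+β+3)·[1 + I_{(1−s)/2}(α+1,β+2) − I_{(1+s)/2}(α+1,β+2)]·[1 + I_{(1−s)/2}(α+2,β+1) − I_{(1+s)/2}(α+2,β+1)] − (α+β+2)·[1 + I_{(1−s)/2}(α+2,β+2) − I_{(1+s)/2}(α+2,β+2)]·[1 + I_{(1−s)/2}(α+1,β+1) − I_{(1+s)/2}(α+1,β+1)]. -/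

import Mathlib

open MeasureTheory

/-- The regularized incomplete beta function
`I_x(a,b) = (∫_0^x t^{a−1}(1−t)^{b−1} dt) / (∫_0^1 t^{a−1}(1−t)^{b−1} dt)`. -/
noncomputable def regIncBeta (x a b : ℝ) : ℝ :=
  (∫ t in (0:ℝ)..x, t ^ (a - 1) * (1 - t) ^ (b - 1)) /
    (∫ t in (0:ℝ)..(1:ℝ), t ^ (a - 1) * (1 - t) ^ (b - 1))

namespace JUE
open intervalIntegral Set


noncomputable def bf (p q : ℝ) (t : ℝ) : ℝ := t ^ p * (1 - t) ^ q

lemma bf_intervalIntegrable {p q : ℝ} (hp : -1 < p) (hq : -1 < q) :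
    IntervalIntegrable (bf p q) volume 0 1 := by
  have h1 : IntervalIntegrable (bf p q) volume 0 (1/2) := by
    have hf : IntervalIntegrable (fun x : ℝ => x ^ p) volume 0 (1/2) :=
      intervalIntegrable_rpow' hp
    have hg : ContinuousOn (fun x : ℝ => (1 - x) ^ q) (Set.uIcc 0 (1/2)) := by
      apply ContinuousOn.rpow_const ((continuous_const.sub continuous_id).continuousOn)
      intro x hx
      rw [Set.uIcc_of_le (by norm_num)] at hx
      exact Or.inl (by simp only [Pi.sub_apply, id_eq]; nlinarith [hx.2])
    exact hf.mul_continuousOn hg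
  have h2 : IntervalIntegrable (bf p q) volume (1/2) 1 := by
    have hf : IntervalIntegrable (fun x : ℝ => (1 - x) ^ q) volume (1/2) 1 := by
      have := (intervalIntegrable_rpow' (r := q) hq (a := 0) (b := 1/2)).comp_sub_left 1
      norm_num at this
      exact this.symm
    have hg : ContinuousOn (fun x : ℝ => x ^ p) (Set.uIcc (1/2) 1) := by
      apply ContinuousOn.rpow_const continuousOn_id
      intro x hx
      rw [Set.uIcc_of_le (by norm_num)] at hx
      exact Or.inl (by simp only [id_eq]; nlinarith [hx.1])
    exact hf.continuousOn_mul hg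
  exact h1.trans h2

lemma bf_pos {p q : ℝ} (hp : -1 < p) (hq : -1 < q) :
    0 < ∫ t in (0:ℝ)..1, bf p q t := by
  apply intervalIntegral_pos_of_pos_on (bf_intervalIntegrable hp hq)
  · intro x hx
    exact mul_pos (Real.rpow_pos_of_pos hx.1 _) (Real.rpow_pos_of_pos (by linarith [hx.2]) _)
  · norm_num




noncomputable def w (p q : ℝ) (x : ℝ) : ℝ := (1 - x) ^ p * (1 + x) ^ q

-- pointwise splitting on [0,1]
lemma bf_split {p q : ℝ} (hp : -1 < p) (hq : -1 < q) {t : ℝ} (ht : t ∈ Set.Icc (0:ℝ) 1) :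
    bf p q t = bf (p+1) q t + bf p (q+1) t := by
  obtain ⟨ht0, ht1⟩ := ht
  rcases eq_or_lt_of_le ht0 with h0 | h0
  · -- t = 0
    simp only [bf, ← h0]
    rw [Real.zero_rpow (by linarith : p + 1 ≠ 0)]
    rcases eq_or_ne p 0 with hp0 | hp0
    · simp [hp0, Real.zero_rpow]
    · rw [Real.zero_rpow hp0]; ring
  rcases eq_or_lt_of_le ht1 with h1 | h1
  · -- t = 1
    simp only [bf, h1, sub_self]
    rw [Real.zero_rpow (by linarith : q + 1 ≠ 0)]
    rcases eq_or_ne q 0 with hq0 | hq0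
    · simp [hq0, Real.zero_rpow]
    · rw [Real.zero_rpow hq0]; ring
  · simp only [bf]
    rw [Real.rpow_add_one (ne_of_gt h0), Real.rpow_add_one (by linarith : (1:ℝ) - t ≠ 0)]
    ring

lemma bf_add {p q : ℝ} (hp : -1 < p) (hq : -1 < q) {x y : ℝ}
    (hx : x ∈ Set.Icc (0:ℝ) 1) (hy : y ∈ Set.Icc (0:ℝ) 1) :
    ∫ t in x..y, bf p q t = (∫ t in x..y, bf (p+1) q t) + ∫ t in x..y, bf p (q+1) t := by
  have hsub : Set.uIcc x y ⊆ Set.uIcc (0:ℝ) 1 := by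
    rw [Set.uIcc_of_le (zero_le_one)]
    exact Set.uIcc_subset_Icc hx hy
  rw [← integral_add ((bf_intervalIntegrable (by linarith) hq).mono_set hsub)
      ((bf_intervalIntegrable hp (by linarith)).mono_set hsub)]
  apply integral_congr
  intro t ht
  have := hsub ht
  rw [Set.uIcc_of_le zero_le_one] at this
  exact bf_split hp hq this

-- bridge to complex beta integral
lemma bf_eq_betaIntegral {a b : ℝ} (ha : 0 < a) (hb : 0 < b) :
    Complex.betaIntegral a b = ((∫ t in (0:ℝ)..1, bf (a-1) (b-1) t : ℝ) : ℂ) := by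
  rw [Complex.betaIntegral, ← intervalIntegral.integral_ofReal]
  apply integral_congr
  intro t ht
  rw [Set.uIcc_of_le zero_le_one] at ht
  push_cast [bf]
  rw [Complex.ofReal_cpow ht.1, Complex.ofReal_cpow (by linarith [ht.2])]
  push_cast
  ring_nf

lemma bf_ibp {a b : ℝ} (ha : 0 < a) (hb : 0 < b) :
    a * ∫ t in (0:ℝ)..1, bf (a-1) b t = b * ∫ t in (0:ℝ)..1, bf a (b-1) t := by
  have h := Complex.betaIntegral_recurrence (u := (a:ℂ)) (v := (b:ℂ)) (by simpa) (by simpa)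
  rw [show ((a:ℂ)) + 1 = ((a+1 : ℝ) : ℂ) by push_cast; ring,
      show ((b:ℂ)) + 1 = ((b+1 : ℝ) : ℂ) by push_cast; ring] at h
  rw [bf_eq_betaIntegral ha (by linarith), bf_eq_betaIntegral (by linarith) hb] at h
  rw [show (a:ℝ) - 1 = a - 1 by rfl] at h
  have h2 : ((a * ∫ t in (0:ℝ)..1, bf (a-1) ((b+1)-1) t : ℝ) : ℂ)
      = ((b * ∫ t in (0:ℝ)..1, bf ((a+1)-1) (b-1) t : ℝ) : ℂ) := by
    push_cast
    exact h
  have h3 := Complex.ofReal_inj.mp h2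
  rw [show (b:ℝ)+1-1 = b by ring, show (a:ℝ)+1-1 = a by ring] at h3
  exact h3




lemma w_intervalIntegrable {p q : ℝ} (hp : -1 < p) (hq : -1 < q) :
    IntervalIntegrable (w p q) volume (-1) 1 := by
  have h1 : IntervalIntegrable (w p q) volume (-1) 0 := by
    have hf : IntervalIntegrable (fun x : ℝ => (1 + x) ^ q) volume (-1) 0 := by
      have := (intervalIntegrable_rpow' (r := q) hq (a := 0) (b := 1)).comp_add_right 1
      norm_num at this
      have heq : (fun x : ℝ => (x + 1) ^ q) = fun x : ℝ => (1 + x) ^ q := by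
        funext x; rw [add_comm]
      rwa [heq] at this
    have hg : ContinuousOn (fun x : ℝ => (1 - x) ^ p) (Set.uIcc (-1:ℝ) 0) := by
      apply ContinuousOn.rpow_const ((continuous_const.sub continuous_id).continuousOn)
      intro x hx
      rw [Set.uIcc_of_le (by norm_num)] at hx
      exact Or.inl (by simp only [Pi.sub_apply, id_eq]; nlinarith [hx.2])
    exact hf.continuousOn_mul hg
  have h2 : IntervalIntegrable (w p q) volume 0 1 := by
    have hf : IntervalIntegrable (fun x : ℝ => (1 - x) ^ p) volume 0 1 := by
      have := (intervalIntegrable_rpow' (r := p) hp (a := 0) (b := 1)).comp_sub_left 1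
      norm_num at this
      exact this.symm
    have hg : ContinuousOn (fun x : ℝ => (1 + x) ^ q) (Set.uIcc (0:ℝ) 1) := by
      apply ContinuousOn.rpow_const ((continuous_const.add continuous_id).continuousOn)
      intro x hx
      rw [Set.uIcc_of_le (by norm_num)] at hx
      exact Or.inl (by simp only [Pi.add_apply, id_eq]; nlinarith [hx.1])
    exact hf.mul_continuousOn hg
  exact h1.trans h2

-- substitution λ = 1 - 2t
lemma w_subst (p q : ℝ) {u v : ℝ} (hu : u ∈ Set.Icc (-1:ℝ) 1) (hv : v ∈ Set.Icc (-1:ℝ) 1) :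
    ∫ x in u..v, w p q x
      = (2:ℝ)^p * 2^q * 2 * ∫ t in ((1-v)/2)..((1-u)/2), bf p q t := by
  have step1 : ∫ x in u..v, w p q x = ∫ y in 1-v..1-u, y ^ p * (2 - y) ^ q := by
    rw [← intervalIntegral.integral_comp_sub_left (fun y => y ^ p * (2 - y) ^ q) 1]
    apply integral_congr
    intro x _
    simp only [w]
    rw [show (2:ℝ) - (1 - x) = 1 + x by ring]
  have step2 : ∫ y in 1-v..1-u, y ^ p * (2 - y) ^ q
      = 2 * ∫ t in ((1-v)/2)..((1-u)/2), (2*t) ^ p * (2 - 2*t) ^ q := by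
    rw [show (1-v:ℝ) = 2 * ((1-v)/2) by ring, show (1-u:ℝ) = 2 * ((1-u)/2) by ring]
    rw [intervalIntegral.integral_comp_mul_left (fun y => y ^ p * (2 - y) ^ q)
      (by norm_num : (2:ℝ) ≠ 0)]
    simp [smul_eq_mul]
  have step3 : ∫ t in ((1-v)/2)..((1-u)/2), (2*t) ^ p * (2 - 2*t) ^ q
      = (2:ℝ)^p * 2^q * ∫ t in ((1-v)/2)..((1-u)/2), bf p q t := by
    rw [← intervalIntegral.integral_const_mul]
    apply integral_congr
    intro t ht
    have hsub : Set.uIcc ((1-v)/2) ((1-u)/2) ⊆ Set.Icc (0:ℝ) 1 := by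
      apply Set.uIcc_subset_Icc <;> constructor <;>
        [skip; skip; skip; skip] <;> [linarith [hv.2]; linarith [hv.1]; linarith [hu.2]; linarith [hu.1]]
    have ht' := hsub ht
    simp only [bf]
    rw [Real.mul_rpow (by norm_num) ht'.1,
      show (2:ℝ) - 2*t = 2 * (1 - t) by ring,
      Real.mul_rpow (by norm_num) (by linarith [ht'.2])]
    ring
  rw [step1, step2, step3]
  ring




lemma w_integrableOn {p q : ℝ} (hp : -1 < p) (hq : -1 < q) {A : Set ℝ}
    (hsub : A ⊆ Set.Icc (-1:ℝ) 1) : IntegrableOn (w p q) A := by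
  exact ((intervalIntegrable_iff_integrableOn_Icc_of_le (by norm_num)).mp
    (w_intervalIntegrable hp hq)).mono_set hsub

lemma ae_mem_Ioo {A : Set ℝ} (hA : MeasurableSet A) (hsub : A ⊆ Set.Icc (-1:ℝ) 1) :
    ∀ᵐ x ∂(volume.restrict A), x ∈ Set.Ioo (-1:ℝ) 1 := by
  rw [ae_restrict_iff' hA]
  have hz : volume ({-1, 1} : Set ℝ) = 0 := by
    rw [show ({-1, 1} : Set ℝ) = {-1} ∪ {1} by rfl]
    exact measure_union_null (measure_singleton _) (measure_singleton _)
  have h := compl_mem_ae_iff.mpr hz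
  filter_upwards [h] with x hx hxA
  have hxI := hsub hxA
  simp only [Set.mem_compl_iff, Set.mem_insert_iff, Set.mem_singleton_iff, not_or] at hx
  constructor
  · exact lt_of_le_of_ne hxI.1 (Ne.symm hx.1)
  · exact lt_of_le_of_ne hxI.2 hx.2

lemma w_split {p q x : ℝ} (hx : x ∈ Set.Ioo (-1:ℝ) 1) :
    w p q x = (w (p+1) q x + w p (q+1) x) / 2 := by
  simp only [w]
  rw [Real.rpow_add_one (by nlinarith [hx.2] : (1:ℝ) - x ≠ 0),
      Real.rpow_add_one (by nlinarith [hx.1] : (1:ℝ) + x ≠ 0)]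
  ring

lemma w_mul_x {p q x : ℝ} (hx : x ∈ Set.Ioo (-1:ℝ) 1) :
    w p q x * x = (w p (q+1) x - w (p+1) q x) / 2 := by
  simp only [w]
  rw [Real.rpow_add_one (by nlinarith [hx.2] : (1:ℝ) - x ≠ 0),
      Real.rpow_add_one (by nlinarith [hx.1] : (1:ℝ) + x ≠ 0)]
  ring

lemma w_mul_sq {p q x : ℝ} (hx : x ∈ Set.Ioo (-1:ℝ) 1) :
    w p q x * x ^ 2 = (w p (q+2) x - 2 * w (p+1) (q+1) x + w (p+2) q x) / 4 := by
  simp only [w]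
  have h1 : (1:ℝ) - x ≠ 0 := by nlinarith [hx.2]
  have h2 : (1:ℝ) + x ≠ 0 := by nlinarith [hx.1]
  rw [show q + 2 = q + 1 + 1 by ring, show p + 2 = p + 1 + 1 by ring,
     Real.rpow_add_one h2 (q+1), Real.rpow_add_one h2 q,
     Real.rpow_add_one h1 (p+1), Real.rpow_add_one h1 p]
  ring

lemma wx_integrableOn {p q : ℝ} (hp : -1 < p) (hq : -1 < q) {A : Set ℝ}
    (hA : MeasurableSet A) (hsub : A ⊆ Set.Icc (-1:ℝ) 1) :
    IntegrableOn (fun x => w p q x * x) A := by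
  have h : IntegrableOn (fun x => (w p (q+1) x - w (p+1) q x) / 2) A :=
    ((w_integrableOn hp (by linarith) hsub).sub
      (w_integrableOn (by linarith) hq hsub)).div_const 2
  refine h.congr ?_
  filter_upwards [ae_mem_Ioo hA hsub] with x hx
  exact (w_mul_x hx).symm

lemma wsq_integrableOn {p q : ℝ} (hp : -1 < p) (hq : -1 < q) {A : Set ℝ}
    (hA : MeasurableSet A) (hsub : A ⊆ Set.Icc (-1:ℝ) 1) :
    IntegrableOn (fun x => w p q x * x ^ 2) A := by
  have h : IntegrableOn
      (fun x => (w p (q+2) x - 2 * w (p+1) (q+1) x + w (p+2) q x) / 4) A :=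
    (((w_integrableOn hp (by linarith) hsub).sub
      ((w_integrableOn (by linarith) (by linarith) hsub).const_mul 2)).add
      (w_integrableOn (by linarith) hq hsub)).div_const 4
  refine h.congr ?_
  filter_upwards [ae_mem_Ioo hA hsub] with x hx
  exact (w_mul_sq hx).symm

lemma d_rel {p q : ℝ} (hp : -1 < p) (hq : -1 < q) {A : Set ℝ}
    (hA : MeasurableSet A) (hsub : A ⊆ Set.Icc (-1:ℝ) 1) :
    2 * ∫ x in A, w p q x
      = (∫ x in A, w (p+1) q x) + ∫ x in A, w p (q+1) x := by
  have h1 : ∫ x in A, w p q x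
      = ∫ x in A, (w (p+1) q x + w p (q+1) x) / 2 := by
    apply MeasureTheory.integral_congr_ae
    filter_upwards [ae_mem_Ioo hA hsub] with x hx
    exact w_split hx
  rw [h1, MeasureTheory.integral_div, integral_add (w_integrableOn (by linarith) hq hsub)
    (w_integrableOn hp (by linarith) hsub)]
  ring

lemma M1_eq {p q : ℝ} (hp : -1 < p) (hq : -1 < q) {A : Set ℝ}
    (hA : MeasurableSet A) (hsub : A ⊆ Set.Icc (-1:ℝ) 1) :
    ∫ x in A, w p q x * x
      = ((∫ x in A, w p (q+1) x) - ∫ x in A, w (p+1) q x) / 2 := by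
  have h1 : ∫ x in A, w p q x * x
      = ∫ x in A, (w p (q+1) x - w (p+1) q x) / 2 := by
    apply MeasureTheory.integral_congr_ae
    filter_upwards [ae_mem_Ioo hA hsub] with x hx
    exact w_mul_x hx
  rw [h1, MeasureTheory.integral_div, integral_sub (w_integrableOn hp (by linarith) hsub)
    (w_integrableOn (by linarith) hq hsub)]

lemma M2_eq {p q : ℝ} (hp : -1 < p) (hq : -1 < q) {A : Set ℝ}
    (hA : MeasurableSet A) (hsub : A ⊆ Set.Icc (-1:ℝ) 1) :
    ∫ x in A, w p q x * x ^ 2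
      = ((∫ x in A, w p (q+2) x) - 2 * (∫ x in A, w (p+1) (q+1) x)
          + ∫ x in A, w (p+2) q x) / 4 := by
  have h1 : ∫ x in A, w p q x * x ^ 2
      = ∫ x in A, (w p (q+2) x - 2 * w (p+1) (q+1) x + w (p+2) q x) / 4 := by
    apply MeasureTheory.integral_congr_ae
    filter_upwards [ae_mem_Ioo hA hsub] with x hx
    exact w_mul_sq hx
  have hA2 : IntegrableOn (fun x => 2 * w (p + 1) (q + 1) x) A :=
    (w_integrableOn (by linarith) (by linarith) hsub).const_mul 2
  have hA1 : IntegrableOn (fun x => w p (q + 2) x - 2 * w (p + 1) (q + 1) x) A :=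
    (w_integrableOn hp (by linarith) hsub).sub hA2
  rw [h1, MeasureTheory.integral_div,
    MeasureTheory.integral_add hA1 (w_integrableOn (by linarith) hq hsub),
    MeasureTheory.integral_sub (w_integrableOn hp (by linarith) hsub) hA2,
    MeasureTheory.integral_const_mul]

lemma prod_eq {α β : ℝ} (hα : -1 < α) (hβ : -1 < β) {A : Set ℝ}
    (hA : MeasurableSet A) (hsub : A ⊆ Set.Icc (-1:ℝ) 1) :
    ∫ l in A ×ˢ A,
        (1 - l.1) ^ α * (1 + l.1) ^ β * ((1 - l.2) ^ α * (1 + l.2) ^ β) * (l.2 - l.1) ^ 2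
      = (∫ x in A, w α β x * x ^ 2) * (∫ x in A, w α β x)
        - 2 * ((∫ x in A, w α β x * x) * ∫ x in A, w α β x * x)
        + (∫ x in A, w α β x) * ∫ x in A, w α β x * x ^ 2 := by
  have hfun : (fun l : ℝ × ℝ =>
      (1 - l.1) ^ α * (1 + l.1) ^ β * ((1 - l.2) ^ α * (1 + l.2) ^ β) * (l.2 - l.1) ^ 2)
      = fun l : ℝ × ℝ => (fun x => w α β x * x ^ 2) l.1 * w α β l.2
          + (fun x => -2 * (w α β x * x)) l.1 * (w α β l.2 * l.2)
          + w α β l.1 * (w α β l.2 * l.2 ^ 2) := by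
    funext l
    simp only [w]
    ring
  rw [hfun]
  have h0 := w_integrableOn hα hβ hsub
  have h1 := wx_integrableOn hα hβ hA hsub
  have h2 := wsq_integrableOn hα hβ hA hsub
  have h1' : IntegrableOn (fun x => -2 * (w α β x * x)) A := h1.const_mul (-2)
  rw [Measure.volume_eq_prod, ← Measure.prod_restrict]
  have hadd1 : Integrable (fun l : ℝ × ℝ => (fun x => w α β x * x ^ 2) l.1 * w α β l.2
      + (fun x => -2 * (w α β x * x)) l.1 * (w α β l.2 * l.2))
      ((volume.restrict A).prod (volume.restrict A)) := (h2.mul_prod h0).add (h1'.mul_prod h1)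
  have hadd2 : Integrable (fun l : ℝ × ℝ => w α β l.1 * (w α β l.2 * l.2 ^ 2))
      ((volume.restrict A).prod (volume.restrict A)) := h0.mul_prod h2
  rw [MeasureTheory.integral_add hadd1 hadd2]
  rw [MeasureTheory.integral_add (h2.mul_prod h0) (h1'.mul_prod h1)]
  have e1 : ∫ (a : ℝ × ℝ), w α β a.1 * a.1 ^ 2 * w α β a.2
        ∂((volume.restrict A).prod (volume.restrict A))
      = (∫ x in A, w α β x * x ^ 2) * ∫ x in A, w α β x :=
    MeasureTheory.integral_prod_mul (fun x => w α β x * x ^ 2) (w α β)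
  have e2 : ∫ (a : ℝ × ℝ), -2 * (w α β a.1 * a.1) * (w α β a.2 * a.2)
        ∂((volume.restrict A).prod (volume.restrict A))
      = (∫ x in A, -2 * (w α β x * x)) * ∫ x in A, w α β x * x :=
    MeasureTheory.integral_prod_mul (fun x => -2 * (w α β x * x)) (fun x => w α β x * x)
  have e3 : ∫ (a : ℝ × ℝ), w α β a.1 * (w α β a.2 * a.2 ^ 2)
        ∂((volume.restrict A).prod (volume.restrict A))
      = (∫ x in A, w α β x) * ∫ x in A, w α β x * x ^ 2 :=
    MeasureTheory.integral_prod_mul (w α β) (fun x => w α β x * x ^ 2)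
  rw [e1, e2, e3, MeasureTheory.integral_const_mul]
  ring


lemma final_algebra (α β u v F00 C00 C01 C10 C11 : ℝ) (hα1 : (0:ℝ) < α+1) (hβ1 : (0:ℝ) < β+1)
    (hu : u ≠ 0) (hv : v ≠ 0) (hF : 0 < F00) :
    32*u^2*v^2*(C01*C10 - C00*C11)
      / (32*u^2*v^2*((α+1)*(β+1)/((α+β+2)^2*(α+β+3)))*F00^2)
    = (α+β+3)*(C01/((β+1)/(α+β+2)*F00))*(C10/((α+1)/(α+β+2)*F00))
      - (α+β+2)*(C11/((α+1)/(α+β+3)*((β+1)/(α+β+2)*F00)))*(C00/F00) := by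
  have hab2 : (0:ℝ) < α+β+2 := by linarith
  have hab3 : (0:ℝ) < α+β+3 := by linarith
  field_simp

end JUE

open JUE in
set_option maxHeartbeats 2000000 in
theorem jue_N2_interior_interval (α β s : ℝ) (hα : -1 < α) (hβ : -1 < β)
    (hs0 : 0 < s) (hs1 : s < 1) :
    (∫ l in (Set.Icc (-1:ℝ) (-s) ∪ Set.Icc s 1) ×ˢ (Set.Icc (-1:ℝ) (-s) ∪ Set.Icc s 1),
        (1 - l.1) ^ α * (1 + l.1) ^ β * ((1 - l.2) ^ α * (1 + l.2) ^ β) * (l.2 - l.1) ^ 2) /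
      (∫ l in Set.Icc (-1:ℝ) 1 ×ˢ Set.Icc (-1:ℝ) 1,
        (1 - l.1) ^ α * (1 + l.1) ^ β * ((1 - l.2) ^ α * (1 + l.2) ^ β) * (l.2 - l.1) ^ 2) =
    (α + β + 3) *
        (1 + regIncBeta ((1 - s) / 2) (α + 1) (β + 2)
          - regIncBeta ((1 + s) / 2) (α + 1) (β + 2)) *
        (1 + regIncBeta ((1 - s) / 2) (α + 2) (β + 1)
          - regIncBeta ((1 + s) / 2) (α + 2) (β + 1))
      - (α + β + 2) *
        (1 + regIncBeta ((1 - s) / 2) (α + 2) (β + 2)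
          - regIncBeta ((1 + s) / 2) (α + 2) (β + 2)) *
        (1 + regIncBeta ((1 - s) / 2) (α + 1) (β + 1)
          - regIncBeta ((1 + s) / 2) (α + 1) (β + 1)) := by
  have hα1 : -1 < α + 1 := by linarith
  have hβ1 : -1 < β + 1 := by linarith
  have hJm : MeasurableSet (Set.Icc (-1:ℝ) (-s) ∪ Set.Icc s 1) :=
    measurableSet_Icc.union measurableSet_Icc
  have hJsub : (Set.Icc (-1:ℝ) (-s) ∪ Set.Icc s 1) ⊆ Set.Icc (-1:ℝ) 1 := by
    rintro x (hx | hx)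
    · exact ⟨hx.1, by linarith [hx.2]⟩
    · exact ⟨by linarith [hx.1], hx.2⟩
  have hBm : MeasurableSet (Set.Icc (-1:ℝ) 1) := measurableSet_Icc
  have hBsub : Set.Icc (-1:ℝ) 1 ⊆ Set.Icc (-1:ℝ) 1 := subset_rfl
  -- substituted values of 1D integrals
  have hC : ∀ p q : ℝ, -1 < p → -1 < q →
      ∫ x in (Set.Icc (-1:ℝ) (-s) ∪ Set.Icc s 1), JUE.w p q x
        = 2^p * 2^q * 2 * ((∫ t in ((1+s)/2)..1, JUE.bf p q t)
            + ∫ t in (0:ℝ)..((1-s)/2), JUE.bf p q t) := by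
    intro p q hp hq
    have hdisj : Disjoint (Set.Icc (-1:ℝ) (-s)) (Set.Icc s 1) := by
      rw [Set.disjoint_left]
      intro x hx hx'
      have h1 := hx.2; have h2 := hx'.1; linarith
    rw [MeasureTheory.setIntegral_union hdisj measurableSet_Icc
      (JUE.w_integrableOn hp hq (Set.Icc_subset_Icc le_rfl (by linarith)))
      (JUE.w_integrableOn hp hq (Set.Icc_subset_Icc (by linarith) le_rfl))]
    rw [MeasureTheory.integral_Icc_eq_integral_Ioc, MeasureTheory.integral_Icc_eq_integral_Ioc,
        ← intervalIntegral.integral_of_le (by linarith : (-1:ℝ) ≤ -s),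
        ← intervalIntegral.integral_of_le (by linarith : s ≤ 1)]
    rw [JUE.w_subst p q (by constructor <;> linarith) (by constructor <;> linarith),
        JUE.w_subst p q (by constructor <;> linarith) (by constructor <;> linarith)]
    rw [show (1 - -s)/2 = (1+s)/2 by ring,
        show (1 - -1 : ℝ)/2 = 1 by norm_num,
        show (1 - (1:ℝ))/2 = 0 by norm_num]
    ring
  have hFull : ∀ p q : ℝ, -1 < p → -1 < q →
      ∫ x in Set.Icc (-1:ℝ) 1, JUE.w p q x
        = 2^p * 2^q * 2 * ∫ t in (0:ℝ)..1, JUE.bf p q t := by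
    intro p q hp hq
    rw [MeasureTheory.integral_Icc_eq_integral_Ioc,
        ← intervalIntegral.integral_of_le (by linarith : (-1:ℝ) ≤ 1),
        JUE.w_subst p q (by constructor <;> linarith) (by constructor <;> linarith)]
    norm_num
  -- double integrals to products of 1D integrals
  have hNum : (∫ l in (Set.Icc (-1:ℝ) (-s) ∪ Set.Icc s 1) ×ˢ (Set.Icc (-1:ℝ) (-s) ∪ Set.Icc s 1),
        (1 - l.1) ^ α * (1 + l.1) ^ β * ((1 - l.2) ^ α * (1 + l.2) ^ β) * (l.2 - l.1) ^ 2)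
      = 2 * ((∫ x in (Set.Icc (-1:ℝ) (-s) ∪ Set.Icc s 1), JUE.w α (β+1) x)
            * (∫ x in (Set.Icc (-1:ℝ) (-s) ∪ Set.Icc s 1), JUE.w (α+1) β x)
          - (∫ x in (Set.Icc (-1:ℝ) (-s) ∪ Set.Icc s 1), JUE.w α β x)
            * (∫ x in (Set.Icc (-1:ℝ) (-s) ∪ Set.Icc s 1), JUE.w (α+1) (β+1) x)) := by
    rw [JUE.prod_eq hα hβ hJm hJsub, JUE.M1_eq hα hβ hJm hJsub, JUE.M2_eq hα hβ hJm hJsub]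
    have r1 := JUE.d_rel hα hβ hJm hJsub
    have r2 := JUE.d_rel hα hβ1 hJm hJsub
    have r3 := JUE.d_rel hα1 hβ hJm hJsub
    rw [show (β:ℝ)+1+1 = β+2 by ring] at r2
    rw [show (α:ℝ)+1+1 = α+2 by ring] at r3
    linear_combination
      ((∫ x in (Set.Icc (-1:ℝ) (-s) ∪ Set.Icc s 1), JUE.w α (β+1) x)
        + ∫ x in (Set.Icc (-1:ℝ) (-s) ∪ Set.Icc s 1), JUE.w (α+1) β x)/2 * r1
      - (∫ x in (Set.Icc (-1:ℝ) (-s) ∪ Set.Icc s 1), JUE.w α β x)/2 * r2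
      - (∫ x in (Set.Icc (-1:ℝ) (-s) ∪ Set.Icc s 1), JUE.w α β x)/2 * r3
  have hDen : (∫ l in Set.Icc (-1:ℝ) 1 ×ˢ Set.Icc (-1:ℝ) 1,
        (1 - l.1) ^ α * (1 + l.1) ^ β * ((1 - l.2) ^ α * (1 + l.2) ^ β) * (l.2 - l.1) ^ 2)
      = 2 * ((∫ x in Set.Icc (-1:ℝ) 1, JUE.w α (β+1) x)
            * (∫ x in Set.Icc (-1:ℝ) 1, JUE.w (α+1) β x)
          - (∫ x in Set.Icc (-1:ℝ) 1, JUE.w α β x)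
            * (∫ x in Set.Icc (-1:ℝ) 1, JUE.w (α+1) (β+1) x)) := by
    rw [JUE.prod_eq hα hβ hBm hBsub, JUE.M1_eq hα hβ hBm hBsub, JUE.M2_eq hα hβ hBm hBsub]
    have r1 := JUE.d_rel hα hβ hBm hBsub
    have r2 := JUE.d_rel hα hβ1 hBm hBsub
    have r3 := JUE.d_rel hα1 hβ hBm hBsub
    rw [show (β:ℝ)+1+1 = β+2 by ring] at r2
    rw [show (α:ℝ)+1+1 = α+2 by ring] at r3
    linear_combination
      ((∫ x in Set.Icc (-1:ℝ) 1, JUE.w α (β+1) x)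
        + ∫ x in Set.Icc (-1:ℝ) 1, JUE.w (α+1) β x)/2 * r1
      - (∫ x in Set.Icc (-1:ℝ) 1, JUE.w α β x)/2 * r2
      - (∫ x in Set.Icc (-1:ℝ) 1, JUE.w α β x)/2 * r3
  -- beta-function relations
  have hW1 := JUE.bf_add hα hβ (Set.left_mem_Icc.mpr zero_le_one) (Set.right_mem_Icc.mpr zero_le_one)
  have hW2 := JUE.bf_add hα hβ1 (Set.left_mem_Icc.mpr zero_le_one) (Set.right_mem_Icc.mpr zero_le_one)
  rw [show (β:ℝ)+1+1 = β+2 by ring] at hW2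
  have hI1 := JUE.bf_ibp (by linarith : (0:ℝ) < α+1) (by linarith : (0:ℝ) < β+1)
  rw [show (α:ℝ)+1-1 = α by ring, show (β:ℝ)+1-1 = β by ring] at hI1
  have hI2 := JUE.bf_ibp (by linarith : (0:ℝ) < α+1) (by linarith : (0:ℝ) < β+2)
  rw [show (α:ℝ)+1-1 = α by ring, show (β:ℝ)+2-1 = β+1 by ring] at hI2
  have hP00 := JUE.bf_pos hα hβ
  have hP01 := JUE.bf_pos hα hβ1
  have hP10 := JUE.bf_pos hα1 hβ
  have hP11 := JUE.bf_pos hα1 hβ1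
  have hab2 : (0:ℝ) < α+β+2 := by linarith
  have hab3 : (0:ℝ) < α+β+3 := by linarith
  have e10 : ∫ t in (0:ℝ)..1, JUE.bf (α+1) β t
      = (α+1)/(α+β+2) * ∫ t in (0:ℝ)..1, JUE.bf α β t := by
    rw [div_mul_eq_mul_div, eq_div_iff (ne_of_gt hab2)]
    linear_combination (-(α+1))*hW1 - hI1
  have e01 : ∫ t in (0:ℝ)..1, JUE.bf α (β+1) t
      = (β+1)/(α+β+2) * ∫ t in (0:ℝ)..1, JUE.bf α β t := by
    rw [div_mul_eq_mul_div, eq_div_iff (ne_of_gt hab2)]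
    linear_combination (-(β+1))*hW1 + hI1
  have e11 : ∫ t in (0:ℝ)..1, JUE.bf (α+1) (β+1) t
      = (α+1)/(α+β+3) * ∫ t in (0:ℝ)..1, JUE.bf α (β+1) t := by
    rw [div_mul_eq_mul_div, eq_div_iff (ne_of_gt hab3)]
    linear_combination (-(α+1))*hW2 - hI2
  -- regIncBeta unfolding
  have hreg : ∀ (x a b : ℝ), regIncBeta x (a+1) (b+1)
      = (∫ t in (0:ℝ)..x, JUE.bf a b t) / ∫ t in (0:ℝ)..1, JUE.bf a b t := by
    intro x a b
    simp only [regIncBeta, JUE.bf, add_sub_cancel_right]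
  have hG : ∀ p q : ℝ, -1 < p → -1 < q →
      1 + (∫ t in (0:ℝ)..((1-s)/2), JUE.bf p q t) / (∫ t in (0:ℝ)..1, JUE.bf p q t)
        - (∫ t in (0:ℝ)..((1+s)/2), JUE.bf p q t) / (∫ t in (0:ℝ)..1, JUE.bf p q t)
      = ((∫ t in ((1+s)/2)..1, JUE.bf p q t) + ∫ t in (0:ℝ)..((1-s)/2), JUE.bf p q t)
          / ∫ t in (0:ℝ)..1, JUE.bf p q t := by
    intro p q hp hq
    have hpos := JUE.bf_pos hp hq
    have hsplit : (∫ t in (0:ℝ)..((1+s)/2), JUE.bf p q t)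
        + (∫ t in ((1+s)/2)..1, JUE.bf p q t) = ∫ t in (0:ℝ)..1, JUE.bf p q t := by
      apply intervalIntegral.integral_add_adjacent_intervals
      · refine (JUE.bf_intervalIntegrable hp hq).mono_set ?_
        rw [Set.uIcc_of_le (by linarith : (0:ℝ) ≤ (1+s)/2), Set.uIcc_of_le zero_le_one]
        exact Set.Icc_subset_Icc le_rfl (by linarith)
      · refine (JUE.bf_intervalIntegrable hp hq).mono_set ?_
        rw [Set.uIcc_of_le (by linarith : (1+s)/2 ≤ (1:ℝ)), Set.uIcc_of_le zero_le_one]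
        exact Set.Icc_subset_Icc (by linarith) le_rfl
    field_simp
    linarith [hsplit]
  -- reduce numerator and denominator
  have hNum' : (∫ l in (Set.Icc (-1:ℝ) (-s) ∪ Set.Icc s 1) ×ˢ (Set.Icc (-1:ℝ) (-s) ∪ Set.Icc s 1),
        (1 - l.1) ^ α * (1 + l.1) ^ β * ((1 - l.2) ^ α * (1 + l.2) ^ β) * (l.2 - l.1) ^ 2)
      = 32 * ((2:ℝ)^α)^2 * ((2:ℝ)^β)^2 *
        (((∫ t in ((1+s)/2)..1, JUE.bf α (β+1) t) + ∫ t in (0:ℝ)..((1-s)/2), JUE.bf α (β+1) t)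
          * ((∫ t in ((1+s)/2)..1, JUE.bf (α+1) β t) + ∫ t in (0:ℝ)..((1-s)/2), JUE.bf (α+1) β t)
        - ((∫ t in ((1+s)/2)..1, JUE.bf α β t) + ∫ t in (0:ℝ)..((1-s)/2), JUE.bf α β t)
          * ((∫ t in ((1+s)/2)..1, JUE.bf (α+1) (β+1) t)
              + ∫ t in (0:ℝ)..((1-s)/2), JUE.bf (α+1) (β+1) t)) := by
    rw [hNum, hC α β hα hβ, hC α (β+1) hα hβ1, hC (α+1) β hα1 hβ, hC (α+1) (β+1) hα1 hβ1,
        Real.rpow_add_one (by norm_num : (2:ℝ) ≠ 0) α,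
        Real.rpow_add_one (by norm_num : (2:ℝ) ≠ 0) β]
    ring
  have hDen' : (∫ l in Set.Icc (-1:ℝ) 1 ×ˢ Set.Icc (-1:ℝ) 1,
        (1 - l.1) ^ α * (1 + l.1) ^ β * ((1 - l.2) ^ α * (1 + l.2) ^ β) * (l.2 - l.1) ^ 2)
      = 32 * ((2:ℝ)^α)^2 * ((2:ℝ)^β)^2 * ((α+1)*(β+1)/((α+β+2)^2*(α+β+3)))
          * (∫ t in (0:ℝ)..1, JUE.bf α β t)^2 := by
    rw [hDen, hFull α β hα hβ, hFull α (β+1) hα hβ1, hFull (α+1) β hα1 hβ,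
        hFull (α+1) (β+1) hα1 hβ1,
        Real.rpow_add_one (by norm_num : (2:ℝ) ≠ 0) α,
        Real.rpow_add_one (by norm_num : (2:ℝ) ≠ 0) β,
        e11, e10, e01]
    field_simp
    ring
  rw [hNum', hDen']
  rw [show (β:ℝ)+2 = β+1+1 by ring, show (α:ℝ)+2 = α+1+1 by ring]
  rw [hreg ((1-s)/2) α (β+1), hreg ((1+s)/2) α (β+1), hreg ((1-s)/2) (α+1) β,
      hreg ((1+s)/2) (α+1) β, hreg ((1-s)/2) (α+1) (β+1), hreg ((1+s)/2) (α+1) (β+1),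
      hreg ((1-s)/2) α β, hreg ((1+s)/2) α β]
  rw [hG α (β+1) hα hβ1, hG (α+1) β hα1 hβ, hG (α+1) (β+1) hα1 hβ1, hG α β hα hβ]
  rw [e11, e10, e01]
  have h2α : (0:ℝ) < (2:ℝ)^α := Real.rpow_pos_of_pos (by norm_num) α
  have h2β : (0:ℝ) < (2:ℝ)^β := Real.rpow_pos_of_pos (by norm_num) β
  exact JUE.final_algebra α β _ _ _ _ _ _ _ (by linarith) (by linarith)
    h2α.ne' h2β.ne' hP00
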